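/- For any n×n Hermitian positive semidefinite matrix M, the permanent of M is at least the product of the permanent of any principal (n−m)×(n−m) submatrix and the permanent of its complementary principal m×m submatrix. In particular, perm(M) ≥ ∏_{i=1}^n M_{ii}. -/

import Mathlib

open scoped BigOperators ComplexOrder

noncomputable def permanent {m : Type*} [Fintype m] [DecidableEq m]
    (M : Matrix m m ℂ) : ℂ :=
  ∑ σ : Equiv.Perm m, ∏ i, M (σ i) i

section Main

open Finset Equiv Matrix

variable {ι : Type*} [Fintype ι] [DecidableEq ι]

private noncomputable def uu (C : Matrix ι ι ℂ) : (ι → ι) → ℂ := fun r => ∏ i, C (r i) i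

private noncomputable def trm (C : Matrix ι ι ℂ) (τ : Equiv.Perm ι) : ℂ :=
  ∑ r : ι → ι, (starRingEnd ℂ) (uu C fun i => r (τ i)) * uu C r

private lemma mul_self_apply (C : Matrix ι ι ℂ) (j k : ι) :
    (Cᴴ * C) j k = ∑ r, (starRingEnd ℂ) (C r j) * C r k := by
  simp [Matrix.mul_apply, Matrix.conjTranspose_apply]

private lemma prod_eq_trm (C : Matrix ι ι ℂ) (τ : Equiv.Perm ι) :
    ∏ i, (Cᴴ * C) (τ i) i = trm C τ⁻¹ := by
  have h1 : ∀ i : ι, (Cᴴ * C) (τ i) i = ∑ r, (starRingEnd ℂ) (C r (τ i)) * C r i :=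
    fun i => mul_self_apply C (τ i) i
  rw [Finset.prod_congr rfl (fun i _ => h1 i), Fintype.prod_sum]
  unfold trm uu
  apply Finset.sum_congr rfl
  intro r _
  rw [Finset.prod_mul_distrib, ← map_prod]
  congr 2
  calc ∏ i, C (r i) (τ i) = ∏ j, C (r (τ⁻¹ (τ j))) (τ j) := by
          apply Finset.prod_congr rfl; intro j _; rw [Equiv.Perm.inv_def, Equiv.symm_apply_apply]
      _ = ∏ i, C (r (τ⁻¹ i)) i := Equiv.prod_comp τ (fun i => C (r (τ⁻¹ i)) i)

private lemma permanent_eq_sum_trm (C : Matrix ι ι ℂ) :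
    _root_.permanent (Cᴴ * C) = ∑ τ : Equiv.Perm ι, trm C τ := by
  unfold _root_.permanent
  rw [Finset.sum_congr rfl (fun τ _ => prod_eq_trm C τ)]
  exact Equiv.sum_comp (Equiv.inv (Equiv.Perm ι)) (trm C)

private def pzero (S : Finset ι) (τ : Equiv.Perm ι) : Prop := ∀ x : ι, x ∈ S ↔ τ x ∈ S

private instance (S : Finset ι) : DecidablePred (pzero S) := fun τ =>
  decidable_of_iff (∀ x : ι, x ∈ S ↔ τ x ∈ S) Iff.rfl

private lemma pzero_inv {S : Finset ι} {τ : Equiv.Perm ι} (h : pzero S τ) : pzero S τ⁻¹ := by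
  intro x
  have := h (τ⁻¹ x)
  simpa using this.symm

private lemma pzero_mul {S : Finset ι} {α β : Equiv.Perm ι} (ha : pzero S α) (hb : pzero S β) :
    pzero S (α * β) := by
  intro x
  exact (hb x).trans (ha (β x))

private lemma pzero_subtypeCongr {S : Finset ι} (z₁ : Equiv.Perm {x : ι // x ∈ S})
    (z₂ : Equiv.Perm {x : ι // ¬ x ∈ S}) : pzero S (Equiv.Perm.subtypeCongr z₁ z₂) := by
  intro x
  by_cases h : x ∈ S
  · rw [Equiv.Perm.subtypeCongr.left_apply z₁ z₂ h]
    exact ⟨fun _ => (z₁ ⟨x, h⟩).2, fun _ => h⟩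
  · rw [Equiv.Perm.subtypeCongr.right_apply z₁ z₂ h]
    exact ⟨fun hx => absurd hx h, fun hx => absurd hx (z₂ ⟨x, h⟩).2⟩

private noncomputable def restr (S : Finset ι) (τ : Equiv.Perm ι) :
    Equiv.Perm {x : ι // x ∈ S} × Equiv.Perm {x : ι // ¬ x ∈ S} :=
  if h : pzero S τ then
    (Equiv.Perm.subtypePerm τ (fun x => (h x).symm),
     Equiv.Perm.subtypePerm τ (fun x => not_iff_not.mpr (h x).symm))
  else 1

private lemma restr_spec (S : Finset ι) (τ : Equiv.Perm ι) (hτ' : pzero S τ) :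
    Equiv.Perm.subtypeCongr (restr S τ).1 (restr S τ).2 = τ := by
  rw [restr, dif_pos hτ']
  ext x
  by_cases h : x ∈ S
  · rw [Equiv.Perm.subtypeCongr.left_apply _ _ h]; rfl
  · rw [Equiv.Perm.subtypeCongr.right_apply _ _ h]; rfl

private lemma sum_filter_pzero (S : Finset ι) (g : Equiv.Perm ι → ℂ) :
    ∑ τ ∈ Finset.univ.filter (pzero S), g τ
      = ∑ z : Equiv.Perm {x : ι // x ∈ S} × Equiv.Perm {x : ι // ¬ x ∈ S},
          g (Equiv.Perm.subtypeCongr z.1 z.2) := by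
  apply Finset.sum_nbij' (i := restr S) (j := fun z => Equiv.Perm.subtypeCongr z.1 z.2)
  · intro τ hτ; exact Finset.mem_univ _
  · intro z _; simpa using pzero_subtypeCongr z.1 z.2
  · intro τ hτ
    exact restr_spec S τ (by simpa using hτ)
  · intro z _
    rw [restr, dif_pos (pzero_subtypeCongr z.1 z.2)]
    ext x
    · simp [Equiv.Perm.subtypePerm_apply, Equiv.Perm.subtypeCongr.left_apply _ _ x.2]
    · simp [Equiv.Perm.subtypePerm_apply, Equiv.Perm.subtypeCongr.right_apply _ _ x.2]
  · intro τ hτ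
    rw [restr_spec S τ (by simpa using hτ)]

private lemma prod_split (S : Finset ι) (f : ι → ℂ) :
    (∏ i : {x : ι // x ∈ S}, f ↑i) * ∏ i : {x : ι // ¬ x ∈ S}, f ↑i = ∏ i, f i := by
  rw [← Finset.prod_mul_prod_compl S f]
  congr 1
  · exact Finset.prod_coe_sort S f
  · exact (Finset.prod_subtype Sᶜ (fun x => Finset.mem_compl) f).symm

private lemma permAB (C : Matrix ι ι ℂ) (S : Finset ι) :
    _root_.permanent ((Cᴴ * C).submatrix (fun i : {x : ι // x ∈ S} => (i : ι))
        (fun i : {x : ι // x ∈ S} => (i : ι))) *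
      _root_.permanent ((Cᴴ * C).submatrix (fun i : {x : ι // ¬ x ∈ S} => (i : ι))
        (fun i : {x : ι // ¬ x ∈ S} => (i : ι)))
      = ∑ τ ∈ Finset.univ.filter (pzero S), trm C τ := by
  rw [sum_filter_pzero]
  have h2 : ∑ z : Equiv.Perm {x : ι // x ∈ S} × Equiv.Perm {x : ι // ¬ x ∈ S},
        trm C (Equiv.Perm.subtypeCongr z.1 z.2)
      = ∑ z : Equiv.Perm {x : ι // x ∈ S} × Equiv.Perm {x : ι // ¬ x ∈ S},
        trm C (Equiv.Perm.subtypeCongr z.1 z.2)⁻¹ := by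
    rw [← Equiv.sum_comp (Equiv.prodCongr (Equiv.inv (Equiv.Perm {x : ι // x ∈ S}))
      (Equiv.inv (Equiv.Perm {x : ι // ¬ x ∈ S})))
      (fun z => trm C (Equiv.Perm.subtypeCongr z.1 z.2))]
    apply Finset.sum_congr rfl
    intro z _
    congr 1
  rw [h2, Fintype.sum_prod_type]
  unfold _root_.permanent
  rw [Finset.sum_mul_sum]
  apply Finset.sum_congr rfl
  intro π₁ _
  apply Finset.sum_congr rfl
  intro π₂ _
  rw [← prod_eq_trm]
  rw [← prod_split S (fun i => (Cᴴ * C) (Equiv.Perm.subtypeCongr π₁ π₂ i) i)]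
  congr 1
  · apply Finset.prod_congr rfl
    intro i _
    rw [Equiv.Perm.subtypeCongr.left_apply_subtype]
    rfl
  · apply Finset.prod_congr rfl
    intro i _
    rw [Equiv.Perm.subtypeCongr.right_apply_subtype]
    rfl

private noncomputable def gsum (C : Matrix ι ι ℂ) {κ : Type*} [Fintype κ] [DecidableEq κ] (emb : κ → ι)
    (p : κ → ι) : ℂ :=
  ∑ π : Equiv.Perm κ, ∏ i, C (p (π i)) (emb i)

private lemma gsum_comp_perm (C : Matrix ι ι ℂ) {κ : Type*} [Fintype κ] [DecidableEq κ]
    (emb : κ → ι) (π : Equiv.Perm κ) (p : κ → ι) :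
    gsum C emb (fun i => p (π i)) = gsum C emb p := by
  unfold gsum
  exact Fintype.sum_equiv (Equiv.mulLeft π) (fun π₁ => ∏ i, C (p (π (π₁ i))) (emb i)) (fun π₁ => ∏ i, C (p (π₁ i)) (emb i)) (fun π₁ => rfl)

private lemma gsum_comp_eq (C : Matrix ι ι ℂ) {κ : Type*} [Fintype κ] [DecidableEq κ]
    (emb : κ → ι) (r : ι → ι) (f₁ f₂ : κ → ι) (h₁ : Function.Injective f₁)
    (h₂ : Function.Injective f₂) (hr : Set.range f₁ = Set.range f₂) :
    gsum C emb (fun i => r (f₁ i)) = gsum C emb (fun i => r (f₂ i)) := by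
  set π : κ ≃ κ := (Equiv.ofInjective f₂ h₂).trans ((Equiv.setCongr hr.symm).trans
    (Equiv.ofInjective f₁ h₁).symm) with hπ
  have key : ∀ i, f₁ (π i) = f₂ i := by
    intro i
    show f₁ ((Equiv.ofInjective f₁ h₁).symm _) = f₂ i
    rw [Equiv.apply_ofInjective_symm h₁]
    rfl
  calc gsum C emb (fun i => r (f₁ i))
      = gsum C emb (fun i => (fun j => r (f₁ j)) (π i)) :=
        (gsum_comp_perm C emb π (fun j => r (f₁ j))).symm
    _ = gsum C emb (fun i => r (f₂ i)) := by
        congr 1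
        funext i
        show r (f₁ (π i)) = r (f₂ i)
        rw [key i]

private noncomputable def ww (C : Matrix ι ι ℂ) (S : Finset ι) (r : ι → ι) : ℂ :=
  gsum C (fun i : {x : ι // x ∈ S} => (i : ι)) (fun i => r ↑i) *
    gsum C (fun i : {x : ι // ¬ x ∈ S} => (i : ι)) (fun i => r ↑i)

private lemma ww_eq_sum (C : Matrix ι ι ℂ) (S : Finset ι) (r : ι → ι) :
    ww C S r = ∑ τ ∈ Finset.univ.filter (pzero S), uu C (fun i => r (τ i)) := by
  rw [sum_filter_pzero S (fun τ => uu C (fun i => r (τ i))), Fintype.sum_prod_type]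
  unfold ww gsum
  rw [Finset.sum_mul_sum]
  apply Finset.sum_congr rfl
  intro π₁ _
  apply Finset.sum_congr rfl
  intro π₂ _
  unfold uu
  rw [← prod_split S (fun i => C (r (Equiv.Perm.subtypeCongr π₁ π₂ i)) i)]
  congr 1
  · apply Finset.prod_congr rfl
    intro i _
    rw [Equiv.Perm.subtypeCongr.left_apply_subtype]
  · apply Finset.prod_congr rfl
    intro i _
    rw [Equiv.Perm.subtypeCongr.right_apply_subtype]

private noncomputable def psi (C : Matrix ι ι ℂ) (S : Finset ι) (τ : Equiv.Perm ι) : ℂ :=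
  ∑ r : ι → ι, (starRingEnd ℂ) (ww C S fun i => r (τ i)) * ww C S r

private def compPerm (β : Equiv.Perm ι) : (ι → ι) ≃ (ι → ι) where
  toFun r := fun i => r (β i)
  invFun r := fun i => r (β⁻¹ i)
  left_inv r := by funext i; simp
  right_inv r := by funext i; simp

private lemma inner_trm (C : Matrix ι ι ℂ) (τ α β : Equiv.Perm ι) :
    ∑ r : ι → ι, (starRingEnd ℂ) (uu C fun i => r (τ (α i))) * uu C (fun i => r (β i))
      = trm C (β⁻¹ * τ * α) := by
  unfold trm
  apply Fintype.sum_equiv (compPerm β)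
  intro r
  have h1 : (fun i => (compPerm β) r ((β⁻¹ * τ * α) i)) = (fun i => r (τ (α i))) := by
    funext i
    show r (β (β⁻¹ (τ (α i)))) = r (τ (α i))
    rw [Equiv.Perm.inv_def, Equiv.apply_symm_apply]
  show _ = (starRingEnd ℂ) (uu C fun i => (compPerm β) r ((β⁻¹ * τ * α) i)) * uu C ((compPerm β) r)
  rw [h1]
  rfl

private lemma psi_eq (C : Matrix ι ι ℂ) (S : Finset ι) (τ : Equiv.Perm ι) :
    psi C S τ = ∑ α ∈ Finset.univ.filter (pzero S), ∑ β ∈ Finset.univ.filter (pzero S),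
      trm C (β⁻¹ * τ * α) := by
  unfold psi
  have h1 : ∀ r : ι → ι, (starRingEnd ℂ) (ww C S fun i => r (τ i)) * ww C S r
      = ∑ α ∈ Finset.univ.filter (pzero S), ∑ β ∈ Finset.univ.filter (pzero S),
          (starRingEnd ℂ) (uu C fun i => r (τ (α i))) * uu C (fun i => r (β i)) := by
    intro r
    rw [ww_eq_sum C S (fun i => r (τ i)), ww_eq_sum C S r, map_sum, Finset.sum_mul_sum]
  rw [Finset.sum_congr rfl (fun r _ => h1 r)]
  rw [Finset.sum_comm]
  apply Finset.sum_congr rfl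
  intro α _
  rw [Finset.sum_comm]
  apply Finset.sum_congr rfl
  intro β _
  exact inner_trm C τ α β

private lemma reindex_compl (C : Matrix ι ι ℂ) (S : Finset ι) {α β : Equiv.Perm ι}
    (hα : pzero S α) (hβ : pzero S β) :
    ∑ τ ∈ Finset.univ.filter (fun τ => ¬ pzero S τ), trm C (β⁻¹ * τ * α)
      = ∑ τ ∈ Finset.univ.filter (fun τ => ¬ pzero S τ), trm C τ := by
  apply Finset.sum_nbij' (i := fun τ => β⁻¹ * τ * α) (j := fun τ => β * τ * α⁻¹)
  · intro τ hτ
    simp only [Finset.mem_filter, Finset.mem_univ, true_and] at hτ ⊢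
    intro hcon
    apply hτ
    have hτe : τ = β * (β⁻¹ * τ * α) * α⁻¹ := by group
    rw [hτe]
    exact pzero_mul (pzero_mul hβ hcon) (pzero_inv hα)
  · intro τ hτ
    simp only [Finset.mem_filter, Finset.mem_univ, true_and] at hτ ⊢
    intro hcon
    apply hτ
    have hτe : τ = β⁻¹ * (β * τ * α⁻¹) * α := by group
    rw [hτe]
    exact pzero_mul (pzero_mul (pzero_inv hβ) hcon) hα
  · intro τ _
    group
  · intro τ _
    group
  · intro τ _
    rfl

private lemma sum_psi_eq (C : Matrix ι ι ℂ) (S : Finset ι) :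
    ∑ τ ∈ Finset.univ.filter (fun τ => ¬ pzero S τ), psi C S τ
      = ((Finset.univ.filter (pzero S)).card : ℂ) ^ 2 *
          ∑ τ ∈ Finset.univ.filter (fun τ => ¬ pzero S τ), trm C τ := by
  rw [Finset.sum_congr rfl (fun τ _ => psi_eq C S τ)]
  calc ∑ τ ∈ Finset.univ.filter (fun τ => ¬ pzero S τ), ∑ α ∈ Finset.univ.filter (pzero S),
          ∑ β ∈ Finset.univ.filter (pzero S), trm C (β⁻¹ * τ * α)
      = ∑ α ∈ Finset.univ.filter (pzero S), ∑ τ ∈ Finset.univ.filter (fun τ => ¬ pzero S τ),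
          ∑ β ∈ Finset.univ.filter (pzero S), trm C (β⁻¹ * τ * α) := Finset.sum_comm
    _ = ∑ α ∈ Finset.univ.filter (pzero S), ∑ β ∈ Finset.univ.filter (pzero S),
          ∑ τ ∈ Finset.univ.filter (fun τ => ¬ pzero S τ), trm C (β⁻¹ * τ * α) := by
        exact Finset.sum_congr rfl (fun α _ => Finset.sum_comm)
    _ = ∑ _α ∈ Finset.univ.filter (pzero S), ∑ _β ∈ Finset.univ.filter (pzero S),
          ∑ τ ∈ Finset.univ.filter (fun τ => ¬ pzero S τ), trm C τ := by
        apply Finset.sum_congr rfl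
        intro α hα
        apply Finset.sum_congr rfl
        intro β hβ
        exact reindex_compl C S (by simpa using hα) (by simpa using hβ)
    _ = ((Finset.univ.filter (pzero S)).card : ℂ) ^ 2 *
          ∑ τ ∈ Finset.univ.filter (fun τ => ¬ pzero S τ), trm C τ := by
        rw [Finset.sum_const, Finset.sum_const, nsmul_eq_mul, nsmul_eq_mul]
        ring

section Pos

variable (S : Finset ι) (ρ : Equiv.Perm ι)

private def Tf : Finset ι := S.image ρ

private abbrev Et := {i : {x : ι // x ∈ S} // (i : ι) ∈ Tf S ρ}
private abbrev Ft := {i : {x : ι // x ∈ S} // ¬ (i : ι) ∈ Tf S ρ}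
private abbrev Gt := {i : {x : ι // ¬ x ∈ S} // (i : ι) ∈ Tf S ρ}
private abbrev It := {i : {x : ι // ¬ x ∈ S} // ¬ (i : ι) ∈ Tf S ρ}

private lemma card_Ft_eq : Fintype.card (Ft S ρ) = Fintype.card (Gt S ρ) := by
  have h1 : Fintype.card (Ft S ρ) = (S \ Tf S ρ).card := by
    rw [← Fintype.card_coe]
    apply Fintype.card_congr
    exact (Equiv.subtypeSubtypeEquivSubtypeInter (fun x => x ∈ S) (fun x => ¬ x ∈ Tf S ρ)).trans
      (Equiv.subtypeEquivRight (fun x => Finset.mem_sdiff.symm))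
  have h2 : Fintype.card (Gt S ρ) = (Tf S ρ \ S).card := by
    rw [← Fintype.card_coe]
    apply Fintype.card_congr
    exact (Equiv.subtypeSubtypeEquivSubtypeInter (fun x => ¬ x ∈ S) (fun x => x ∈ Tf S ρ)).trans
      (Equiv.subtypeEquivRight (fun x => and_comm.trans Finset.mem_sdiff.symm))
  rw [h1, h2]
  apply Finset.card_sdiff_comm
  rw [Tf, Finset.card_image_of_injective _ ρ.injective]

private noncomputable def eFG : Ft S ρ ≃ Gt S ρ := Fintype.equivOfCardEq (card_Ft_eq S ρ)

private noncomputable def ePt : ({x : ι // x ∈ S} → ι) ≃ ((Et S ρ → ι) × (Ft S ρ → ι)) :=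
  Equiv.piEquivPiSubtypeProd (fun i : {x : ι // x ∈ S} => (i : ι) ∈ Tf S ρ) (fun _ => ι)

private noncomputable def eQt : ({x : ι // ¬ x ∈ S} → ι) ≃ ((Gt S ρ → ι) × (It S ρ → ι)) :=
  Equiv.piEquivPiSubtypeProd (fun i : {x : ι // ¬ x ∈ S} => (i : ι) ∈ Tf S ρ) (fun _ => ι)

private noncomputable def Ahat (C : Matrix ι ι ℂ) : (Et S ρ → ι) → (Ft S ρ → ι) → ℂ :=
  fun pE x => gsum C (fun i : {x : ι // x ∈ S} => (i : ι)) ((ePt S ρ).symm (pE, x))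

private noncomputable def Bhat (C : Matrix ι ι ℂ) : (It S ρ → ι) → (Ft S ρ → ι) → ℂ :=
  fun qI x => gsum C (fun i : {x : ι // ¬ x ∈ S} => (i : ι))
    ((eQt S ρ).symm (fun g => x ((eFG S ρ).symm g), qI))

private lemma K1 (C : Matrix ι ι ℂ) (r : ι → ι) :
    gsum C (fun i : {x : ι // x ∈ S} => (i : ι)) (fun i => r ↑i)
      = Ahat S ρ C (fun i => r ↑↑i) (fun i => r ↑↑i) := by
  unfold Ahat
  congr 1
  funext j
  show (fun i => r ↑i) j = if h : (j : ι) ∈ Tf S ρ then r ↑↑(⟨j, h⟩ : Et S ρ) else r ↑j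
  by_cases h : (j : ι) ∈ Tf S ρ
  · rw [dif_pos h]
  · rw [dif_neg h]

private lemma K2 (C : Matrix ι ι ℂ) (r : ι → ι) :
    gsum C (fun i : {x : ι // ¬ x ∈ S} => (i : ι)) (fun i => r ↑i)
      = Bhat S ρ C (fun i => r ↑↑i) (fun f => r ↑↑(eFG S ρ f)) := by
  unfold Bhat
  congr 1
  funext j
  show (fun i => r ↑i) j = if h : (j : ι) ∈ Tf S ρ
      then r ↑↑(eFG S ρ ((eFG S ρ).symm ⟨j, h⟩)) else r ↑j
  by_cases h : (j : ι) ∈ Tf S ρ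
  · rw [dif_pos h, Equiv.apply_symm_apply]
  · rw [dif_neg h]

private noncomputable def gfun : {x : ι // x ∈ S} → ι := fun j =>
  if h : (j : ι) ∈ Tf S ρ then (j : ι) else ↑↑(eFG S ρ ⟨j, h⟩)

private lemma gfun_inj : Function.Injective (gfun S ρ) := by
  intro i j hij
  unfold gfun at hij
  by_cases hi : (i : ι) ∈ Tf S ρ <;> by_cases hj : (j : ι) ∈ Tf S ρ
  · rw [dif_pos hi, dif_pos hj] at hij
    exact Subtype.coe_injective hij
  · rw [dif_pos hi, dif_neg hj] at hij
    have h2 := (↑(eFG S ρ ⟨j, hj⟩) : {x : ι // ¬ x ∈ S}).2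
    rw [← hij] at h2
    exact absurd (↑i : {x : ι // x ∈ S}).2 h2
  · rw [dif_neg hi, dif_pos hj] at hij
    have h2 := (↑(eFG S ρ ⟨i, hi⟩) : {x : ι // ¬ x ∈ S}).2
    rw [hij] at h2
    exact absurd (↑j : {x : ι // x ∈ S}).2 h2
  · rw [dif_neg hi, dif_neg hj] at hij
    have h1 : eFG S ρ ⟨i, hi⟩ = eFG S ρ ⟨j, hj⟩ :=
      Subtype.coe_injective (Subtype.coe_injective hij)
    have h2 := (eFG S ρ).injective h1
    exact congrArg Subtype.val h2

private lemma range_rho_P : Set.range (fun i : {x : ι // x ∈ S} => ρ (i : ι))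
    = {x : ι | x ∈ Tf S ρ} := by
  ext x
  constructor
  · rintro ⟨i, rfl⟩
    exact Finset.mem_image_of_mem ρ i.2
  · intro hx
    obtain ⟨a, ha, rfl⟩ := Finset.mem_image.mp hx
    exact ⟨⟨a, ha⟩, rfl⟩

private lemma range_gfun : Set.range (gfun S ρ) = {x : ι | x ∈ Tf S ρ} := by
  ext x
  constructor
  · rintro ⟨j, rfl⟩
    unfold gfun
    by_cases h : (j : ι) ∈ Tf S ρ
    · rw [dif_pos h]; exact h
    · rw [dif_neg h]; exact (eFG S ρ ⟨j, h⟩).2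
  · intro hx
    by_cases hs : x ∈ S
    · refine ⟨⟨x, hs⟩, ?_⟩
      unfold gfun
      exact dif_pos hx
    · refine ⟨↑((eFG S ρ).symm ⟨⟨x, hs⟩, hx⟩), ?_⟩
      have hft : ¬ ((↑((eFG S ρ).symm ⟨⟨x, hs⟩, hx⟩) : {x : ι // x ∈ S}) : ι) ∈ Tf S ρ :=
        ((eFG S ρ).symm ⟨⟨x, hs⟩, hx⟩).2
      unfold gfun
      rw [dif_neg hft]
      have heta : (⟨↑((eFG S ρ).symm ⟨⟨x, hs⟩, hx⟩), hft⟩ : Ft S ρ)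
          = (eFG S ρ).symm ⟨⟨x, hs⟩, hx⟩ := Subtype.ext rfl
      rw [heta, Equiv.apply_symm_apply]

private lemma K3 (C : Matrix ι ι ℂ) (r : ι → ι) :
    gsum C (fun i : {x : ι // x ∈ S} => (i : ι)) (fun i => r (ρ ↑i))
      = Ahat S ρ C (fun i => r ↑↑i) (fun f => r ↑↑(eFG S ρ f)) := by
  have hg : ((ePt S ρ).symm (fun i : Et S ρ => r ↑↑i, fun f : Ft S ρ => r ↑↑(eFG S ρ f)))
      = fun j => r (gfun S ρ j) := by
    funext j
    show (if h : (j : ι) ∈ Tf S ρ then r ↑↑(⟨j, h⟩ : Et S ρ) else r ↑↑(eFG S ρ ⟨j, h⟩))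
      = r (gfun S ρ j)
    unfold gfun
    by_cases h : (j : ι) ∈ Tf S ρ
    · rw [dif_pos h, dif_pos h]
    · rw [dif_neg h, dif_neg h]
  unfold Ahat
  rw [hg]
  exact gsum_comp_eq C _ r _ (gfun S ρ)
    (fun i j hij => Subtype.coe_injective (ρ.injective hij))
    (gfun_inj S ρ) ((range_rho_P S ρ).trans (range_gfun S ρ).symm)

private noncomputable def gfun2 : {x : ι // ¬ x ∈ S} → ι := fun j =>
  if h : (j : ι) ∈ Tf S ρ then ↑↑((eFG S ρ).symm ⟨j, h⟩) else (j : ι)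

private lemma gfun2_inj : Function.Injective (gfun2 S ρ) := by
  intro i j hij
  unfold gfun2 at hij
  by_cases hi : (i : ι) ∈ Tf S ρ <;> by_cases hj : (j : ι) ∈ Tf S ρ
  · rw [dif_pos hi, dif_pos hj] at hij
    have h1 : (eFG S ρ).symm ⟨i, hi⟩ = (eFG S ρ).symm ⟨j, hj⟩ :=
      Subtype.coe_injective (Subtype.coe_injective hij)
    have h2 := (eFG S ρ).symm.injective h1
    exact congrArg Subtype.val h2
  · rw [dif_pos hi, dif_neg hj] at hij
    have h2 := (↑((eFG S ρ).symm ⟨i, hi⟩) : {x : ι // x ∈ S}).2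
    rw [hij] at h2
    exact absurd h2 (↑j : {x : ι // ¬ x ∈ S}).2
  · rw [dif_neg hi, dif_pos hj] at hij
    have h2 := (↑((eFG S ρ).symm ⟨j, hj⟩) : {x : ι // x ∈ S}).2
    rw [← hij] at h2
    exact absurd h2 (↑i : {x : ι // ¬ x ∈ S}).2
  · rw [dif_neg hi, dif_neg hj] at hij
    exact Subtype.coe_injective hij

private lemma range_rho_Q : Set.range (fun i : {x : ι // ¬ x ∈ S} => ρ (i : ι))
    = {x : ι | ¬ x ∈ Tf S ρ} := by
  ext x
  constructor
  · rintro ⟨i, rfl⟩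
    intro hmem
    obtain ⟨a, ha, hae⟩ := Finset.mem_image.mp hmem
    exact i.2 (by rwa [ρ.injective hae] at ha)
  · intro hx
    have hns : ¬ ρ.symm x ∈ S := by
      intro h
      apply hx
      have := Finset.mem_image_of_mem ρ h
      rwa [Equiv.apply_symm_apply] at this
    exact ⟨⟨ρ.symm x, hns⟩, Equiv.apply_symm_apply ρ x⟩

private lemma range_gfun2 : Set.range (gfun2 S ρ) = {x : ι | ¬ x ∈ Tf S ρ} := by
  ext x
  constructor
  · rintro ⟨j, rfl⟩
    unfold gfun2
    by_cases h : (j : ι) ∈ Tf S ρ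
    · rw [dif_pos h]; exact ((eFG S ρ).symm ⟨j, h⟩).2
    · rw [dif_neg h]; exact h
  · intro hx
    by_cases hs : x ∈ S
    · refine ⟨↑(eFG S ρ ⟨⟨x, hs⟩, hx⟩), ?_⟩
      have hgt : ((↑(eFG S ρ ⟨⟨x, hs⟩, hx⟩) : {x : ι // ¬ x ∈ S}) : ι) ∈ Tf S ρ :=
        (eFG S ρ ⟨⟨x, hs⟩, hx⟩).2
      unfold gfun2
      rw [dif_pos hgt]
      have heta : (⟨↑(eFG S ρ ⟨⟨x, hs⟩, hx⟩), hgt⟩ : Gt S ρ)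
          = eFG S ρ ⟨⟨x, hs⟩, hx⟩ := Subtype.ext rfl
      rw [heta, Equiv.symm_apply_apply]
    · refine ⟨⟨x, hs⟩, ?_⟩
      unfold gfun2
      exact dif_neg hx

private lemma K4 (C : Matrix ι ι ℂ) (r : ι → ι) :
    gsum C (fun i : {x : ι // ¬ x ∈ S} => (i : ι)) (fun i => r (ρ ↑i))
      = Bhat S ρ C (fun i => r ↑↑i) (fun f => r ↑↑f) := by
  have hg : ((eQt S ρ).symm (fun g : Gt S ρ => r ↑↑((eFG S ρ).symm g), fun i : It S ρ => r ↑↑i))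
      = fun j => r (gfun2 S ρ j) := by
    funext j
    show (if h : (j : ι) ∈ Tf S ρ then r ↑↑((eFG S ρ).symm ⟨j, h⟩) else r ↑↑(⟨j, h⟩ : It S ρ))
      = r (gfun2 S ρ j)
    unfold gfun2
    by_cases h : (j : ι) ∈ Tf S ρ
    · rw [dif_pos h, dif_pos h]
    · rw [dif_neg h, dif_neg h]
  unfold Bhat
  rw [hg]
  exact gsum_comp_eq C _ r _ (gfun2 S ρ)
    (fun i j hij => Subtype.coe_injective (ρ.injective hij))
    (gfun2_inj S ρ) ((range_rho_Q S ρ).trans (range_gfun2 S ρ).symm)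

private def compEquiv {κ₁ κ₂ : Type*} (e : κ₁ ≃ κ₂) : (κ₂ → ι) ≃ (κ₁ → ι) where
  toFun f := fun i => f (e i)
  invFun f := fun i => f (e.symm i)
  left_inv f := by funext i; show f (e (e.symm i)) = f i; rw [Equiv.apply_symm_apply]
  right_inv f := by funext i; show f (e.symm (e i)) = f i; rw [Equiv.symm_apply_apply]

private noncomputable def ESplit : (ι → ι) ≃
    (((Et S ρ → ι) × (Ft S ρ → ι)) × ((Gt S ρ → ι) × (It S ρ → ι))) :=
  (Equiv.piEquivPiSubtypeProd (fun x => x ∈ S) (fun _ => ι)).trans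
    (Equiv.prodCongr (ePt S ρ) (eQt S ρ))

private noncomputable def F4 (C : Matrix ι ι ℂ) :
    (((Et S ρ → ι) × (Ft S ρ → ι)) × ((Gt S ρ → ι) × (It S ρ → ι))) → ℂ :=
  fun z => (starRingEnd ℂ) (Ahat S ρ C z.1.1 (fun f => z.2.1 (eFG S ρ f)) *
      Bhat S ρ C z.2.2 z.1.2) *
    (Ahat S ρ C z.1.1 z.1.2 * Bhat S ρ C z.2.2 (fun f => z.2.1 (eFG S ρ f)))

private lemma summand_eq (C : Matrix ι ι ℂ) (r : ι → ι) :
    (starRingEnd ℂ) (ww C S fun i => r (ρ i)) * ww C S r = F4 S ρ C (ESplit S ρ r) := by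
  have e1 : ww C S (fun i => r (ρ i)) = gsum C (fun i : {x : ι // x ∈ S} => (i : ι))
        (fun i => r (ρ ↑i)) *
      gsum C (fun i : {x : ι // ¬ x ∈ S} => (i : ι)) (fun i => r (ρ ↑i)) := rfl
  have e2 : ww C S r = gsum C (fun i : {x : ι // x ∈ S} => (i : ι)) (fun i => r ↑i) *
      gsum C (fun i : {x : ι // ¬ x ∈ S} => (i : ι)) (fun i => r ↑i) := rfl
  rw [e1, e2, K1 S ρ C r, K2 S ρ C r, K3 S ρ C r, K4 S ρ C r]
  rfl

private lemma psi_nonneg (C : Matrix ι ι ℂ) : 0 ≤ psi C S ρ := by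
  have h0 : psi C S ρ = ∑ z, F4 S ρ C z := by
    unfold psi
    rw [Finset.sum_congr rfl (fun r _ => summand_eq S ρ C r)]
    exact Equiv.sum_comp (ESplit S ρ) (F4 S ρ C)
  have h1 : ∑ z, F4 S ρ C z
      = ∑ pE : Et S ρ → ι, ∑ pF : Ft S ρ → ι, ∑ qG : Gt S ρ → ι, ∑ qI : It S ρ → ι,
          F4 S ρ C ((pE, pF), (qG, qI)) := by
    rw [Fintype.sum_prod_type, Fintype.sum_prod_type]
    apply Finset.sum_congr rfl
    intro pE _
    apply Finset.sum_congr rfl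
    intro pF _
    rw [Fintype.sum_prod_type]
  rw [h0, h1]
  apply Finset.sum_nonneg
  intro pE _
  have h2 : ∑ pF : Ft S ρ → ι, ∑ qG : Gt S ρ → ι, ∑ qI : It S ρ → ι,
        F4 S ρ C ((pE, pF), (qG, qI))
      = ∑ qI : It S ρ → ι, ∑ pF : Ft S ρ → ι, ∑ qG : Gt S ρ → ι,
        F4 S ρ C ((pE, pF), (qG, qI)) := by
    rw [Finset.sum_congr rfl (fun pF (_ : pF ∈ Finset.univ) => Finset.sum_comm)]
    exact Finset.sum_comm
  rw [h2]
  apply Finset.sum_nonneg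
  intro qI _
  -- reindex qG-sum along eFG, then factor
  have h3 : ∀ pF : Ft S ρ → ι, ∑ qG : Gt S ρ → ι, F4 S ρ C ((pE, pF), (qG, qI))
      = ∑ y : Ft S ρ → ι,
          ((starRingEnd ℂ) (Bhat S ρ C qI pF) * Ahat S ρ C pE pF) *
            ((starRingEnd ℂ) (Ahat S ρ C pE y) * Bhat S ρ C qI y) := by
    intro pF
    rw [← Equiv.sum_comp (compEquiv (eFG S ρ))
      (fun y => ((starRingEnd ℂ) (Bhat S ρ C qI pF) * Ahat S ρ C pE pF) *
        ((starRingEnd ℂ) (Ahat S ρ C pE y) * Bhat S ρ C qI y))]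
    apply Finset.sum_congr rfl
    intro qG _
    show (starRingEnd ℂ) (Ahat S ρ C pE (fun f => qG (eFG S ρ f)) * Bhat S ρ C qI pF) *
        (Ahat S ρ C pE pF * Bhat S ρ C qI (fun f => qG (eFG S ρ f)))
      = ((starRingEnd ℂ) (Bhat S ρ C qI pF) * Ahat S ρ C pE pF) *
          ((starRingEnd ℂ) (Ahat S ρ C pE (fun f => qG (eFG S ρ f))) *
            Bhat S ρ C qI (fun f => qG (eFG S ρ f)))
    rw [_root_.map_mul]
    ring
  rw [Finset.sum_congr rfl (fun pF _ => h3 pF)]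
  rw [← Finset.sum_mul_sum]
  set Z₁ := ∑ pF : Ft S ρ → ι, (starRingEnd ℂ) (Bhat S ρ C qI pF) * Ahat S ρ C pE pF with hZ₁
  have hconj : ∑ y : Ft S ρ → ι, (starRingEnd ℂ) (Ahat S ρ C pE y) * Bhat S ρ C qI y
      = (starRingEnd ℂ) Z₁ := by
    rw [hZ₁, map_sum]
    apply Finset.sum_congr rfl
    intro y _
    rw [_root_.map_mul, Complex.conj_conj]
    ring
  rw [hconj, Complex.mul_conj]
  rw [Complex.zero_le_real]
  exact Complex.normSq_nonneg _

end Pos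

private lemma residual_nonneg (C : Matrix ι ι ℂ) (S : Finset ι) :
    0 ≤ ∑ τ ∈ Finset.univ.filter (fun τ => ¬ pzero S τ), trm C τ := by
  set m := (Finset.univ.filter (pzero S)).card with hm
  have hm0 : 0 < m := by
    rw [hm]
    apply Finset.card_pos.mpr
    exact ⟨1, Finset.mem_filter.mpr ⟨Finset.mem_univ _, fun x => Iff.rfl⟩⟩
  have hpsi : 0 ≤ ∑ τ ∈ Finset.univ.filter (fun τ => ¬ pzero S τ), psi C S τ :=
    Finset.sum_nonneg (fun τ _ => psi_nonneg S τ C)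
  rw [sum_psi_eq] at hpsi
  have hinv : (0:ℂ) ≤ Complex.ofReal (((m : ℝ)^2)⁻¹) :=
    Complex.zero_le_real.mpr (by positivity)
  have h2 : Complex.ofReal (((m : ℝ)^2)⁻¹) * (((m:ℂ))^2 *
        ∑ τ ∈ Finset.univ.filter (fun τ => ¬ pzero S τ), trm C τ)
      = ∑ τ ∈ Finset.univ.filter (fun τ => ¬ pzero S τ), trm C τ := by
    rw [← mul_assoc]
    have hmne : (m : ℂ) ≠ 0 := by exact_mod_cast hm0.ne'
    have h3 : Complex.ofReal (((m : ℝ)^2)⁻¹) * ((m:ℂ))^2 = 1 := by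
      rw [Complex.ofReal_inv, Complex.ofReal_pow, Complex.ofReal_natCast]
      field_simp
    rw [h3, one_mul]
  rw [← h2]
  exact mul_nonneg hinv hpsi

private lemma perm_split (C : Matrix ι ι ℂ) (S : Finset ι) :
    _root_.permanent (Cᴴ * C)
      = _root_.permanent ((Cᴴ * C).submatrix (fun i : {x : ι // x ∈ S} => (i : ι))
          (fun i : {x : ι // x ∈ S} => (i : ι))) *
        _root_.permanent ((Cᴴ * C).submatrix (fun i : {x : ι // ¬ x ∈ S} => (i : ι))
          (fun i : {x : ι // ¬ x ∈ S} => (i : ι)))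
        + ∑ τ ∈ Finset.univ.filter (fun τ => ¬ pzero S τ), trm C τ := by
  rw [permanent_eq_sum_trm, permAB]
  exact (Finset.sum_filter_add_sum_filter_not Finset.univ (pzero S) (trm C)).symm

private lemma perm_im_zero {κ : Type*} [Fintype κ] [DecidableEq κ] (M : Matrix κ κ ℂ)
    (h : M.IsHermitian) : (_root_.permanent M).im = 0 := by
  rw [← Complex.conj_eq_iff_im]
  unfold _root_.permanent
  rw [map_sum]
  have h1 : ∀ σ : Equiv.Perm κ, (starRingEnd ℂ) (∏ i, M (σ i) i) = ∏ i, M (σ⁻¹ i) i := by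
    intro σ
    rw [map_prod]
    have h2 : ∀ i : κ, (starRingEnd ℂ) (M (σ i) i) = M i (σ i) := by
      intro i
      have := congrFun (congrFun h.symm i) (σ i)
      rw [Matrix.conjTranspose_apply] at this
      exact this.symm
    rw [Finset.prod_congr rfl (fun i _ => h2 i)]
    calc ∏ i, M i (σ i) = ∏ j, M (σ⁻¹ (σ j)) (σ (σ⁻¹ (σ j))) := by
          apply Finset.prod_congr rfl
          intro j _
          rw [Equiv.Perm.inv_def, Equiv.symm_apply_apply]
      _ = ∏ i, M (σ⁻¹ i) (σ (σ⁻¹ i)) := Equiv.prod_comp σ (fun i => M (σ⁻¹ i) (σ (σ⁻¹ i)))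
      _ = ∏ i, M (σ⁻¹ i) i := by
          apply Finset.prod_congr rfl
          intro i _
          rw [Equiv.Perm.inv_def, Equiv.apply_symm_apply]
  rw [Finset.sum_congr rfl (fun σ _ => h1 σ)]
  exact Equiv.sum_comp (Equiv.inv (Equiv.Perm κ)) (fun σ => ∏ i, M (σ i) i)

private lemma permanent_reindex_eq {κ₁ κ₂ : Type*} [Fintype κ₁] [DecidableEq κ₁] [Fintype κ₂]
    [DecidableEq κ₂] (e : κ₁ ≃ κ₂) (M : Matrix κ₂ κ₂ ℂ) :
    _root_.permanent (M.submatrix e e) = _root_.permanent M := by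
  unfold _root_.permanent
  apply Fintype.sum_equiv (Equiv.permCongr e)
  intro σ
  rw [← Equiv.prod_comp e (fun j => M ((Equiv.permCongr e σ) j) j)]
  apply Finset.prod_congr rfl
  intro i _
  show M (e (σ i)) (e i) = M (e (σ (e.symm (e i)))) (e i)
  rw [Equiv.symm_apply_apply]

private lemma main_ineq {κ : Type*} [Fintype κ] [DecidableEq κ] (M : Matrix κ κ ℂ)
    (hM : M.PosSemidef) (S : Finset κ) :
    (_root_.permanent (M.submatrix (fun i : {x // x ∈ S} => (i : κ))
        (fun i : {x // x ∈ S} => (i : κ)))).re *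
      (_root_.permanent (M.submatrix (fun i : {x // x ∈ Sᶜ} => (i : κ))
        (fun i : {x // x ∈ Sᶜ} => (i : κ)))).re ≤ (_root_.permanent M).re := by
  obtain ⟨C, rfl⟩ : ∃ C : Matrix κ κ ℂ, M = Cᴴ * C := by
    open scoped MatrixOrder in exact CStarAlgebra.nonneg_iff_eq_star_mul_self.mp hM.nonneg
  have hcompl : _root_.permanent ((Cᴴ * C).submatrix (fun i : {x // x ∈ Sᶜ} => (i : κ))
        (fun i : {x // x ∈ Sᶜ} => (i : κ)))
      = _root_.permanent ((Cᴴ * C).submatrix (fun i : {x : κ // ¬ x ∈ S} => (i : κ))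
        (fun i : {x : κ // ¬ x ∈ S} => (i : κ))) := by
    rw [← permanent_reindex_eq (Equiv.subtypeEquivRight (fun x => (Finset.mem_compl (s := S)).symm))
      ((Cᴴ * C).submatrix (fun i : {x // x ∈ Sᶜ} => (i : κ)) (fun i : {x // x ∈ Sᶜ} => (i : κ)))]
    rw [Matrix.submatrix_submatrix]
    rfl
  rw [hcompl]
  have hsplit := perm_split C S
  have hres' := residual_nonneg C S
  have hres : (0:ℝ) ≤ (∑ τ ∈ Finset.univ.filter (fun τ => ¬ pzero S τ), trm C τ).re := by
    rw [Complex.le_def] at hres'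
    simpa using hres'.1
  set A := _root_.permanent ((Cᴴ * C).submatrix (fun i : {x : κ // x ∈ S} => (i : κ))
    (fun i : {x : κ // x ∈ S} => (i : κ))) with hA
  set B := _root_.permanent ((Cᴴ * C).submatrix (fun i : {x : κ // ¬ x ∈ S} => (i : κ))
    (fun i : {x : κ // ¬ x ∈ S} => (i : κ))) with hB
  have hAim : A.im = 0 := perm_im_zero _ ((hM.submatrix _).1)
  have hBim : B.im = 0 := perm_im_zero _ ((hM.submatrix _).1)
  have : (_root_.permanent (Cᴴ * C)).re = A.re * B.re - A.im * B.im +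
      (∑ τ ∈ Finset.univ.filter (fun τ => ¬ pzero S τ), trm C τ).re := by
    rw [hsplit]
    simp [Complex.add_re, Complex.mul_re]
  rw [this, hAim]
  simp only [zero_mul, mul_zero, sub_zero]
  linarith [hres]

private lemma diag_re_nonneg {κ : Type*} [Fintype κ] [DecidableEq κ] (M : Matrix κ κ ℂ)
    (hM : M.PosSemidef) (i : κ) : 0 ≤ (M i i).re := by
  obtain ⟨C, rfl⟩ : ∃ C : Matrix κ κ ℂ, M = Cᴴ * C := by
    open scoped MatrixOrder in exact CStarAlgebra.nonneg_iff_eq_star_mul_self.mp hM.nonneg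
  rw [mul_self_apply, Complex.re_sum]
  apply Finset.sum_nonneg
  intro r _
  rw [mul_comm, Complex.mul_conj]
  rw [Complex.ofReal_re]
  exact Complex.normSq_nonneg _

private lemma diag_le_perm : ∀ (n : ℕ) {κ : Type*} [Fintype κ] [DecidableEq κ]
    (M : Matrix κ κ ℂ), M.PosSemidef → Fintype.card κ = n →
    (∏ i, (M i i).re) ≤ (_root_.permanent M).re := by
  intro n
  induction n using Nat.strong_induction_on with
  | _ n IH =>
    intro κ _ _ M hM hcard
    rcases isEmpty_or_nonempty κ with he | hne
    · rw [show _root_.permanent M = Matrix.permanent M from rfl, Matrix.permanent_isEmpty]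
      rw [Finset.univ_eq_empty, Finset.prod_empty]
      simp
    · obtain ⟨i₀⟩ := hne
      set S : Finset κ := {i₀} with hS
      have hsub : (M.submatrix (fun i : {x // x ∈ Sᶜ} => (i : κ))
          (fun i : {x // x ∈ Sᶜ} => (i : κ))).PosSemidef := hM.submatrix _
      have hcard' : Fintype.card {x // x ∈ Sᶜ} = n - 1 := by
        rw [Fintype.card_coe, Finset.card_compl, hS, Finset.card_singleton, hcard]
      have hn0 : 0 < n := by
        rw [← hcard]
        exact Fintype.card_pos_iff.mpr ⟨i₀⟩
      have hIH := IH (n - 1) (by omega) (M.submatrix (fun i : {x // x ∈ Sᶜ} => (i : κ))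
        (fun i : {x // x ∈ Sᶜ} => (i : κ))) hsub hcard'
      have hprod : (∏ i, (M i i).re) = (M i₀ i₀).re * ∏ i : {x // x ∈ Sᶜ}, (M ↑i ↑i).re := by
        rw [← Finset.prod_mul_prod_compl S (fun i => (M i i).re)]
        congr 1
        · rw [hS, Finset.prod_singleton]
        · exact (Finset.prod_coe_sort Sᶜ (fun i => (M i i).re)).symm
      have hpermS : (_root_.permanent (M.submatrix (fun i : {x // x ∈ S} => (i : κ))
          (fun i : {x // x ∈ S} => (i : κ)))) = M i₀ i₀ := by
        rw [show _root_.permanent (M.submatrix (fun i : {x // x ∈ S} => (i : κ))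
          (fun i : {x // x ∈ S} => (i : κ))) = Matrix.permanent (M.submatrix
          (fun i : {x // x ∈ S} => (i : κ)) (fun i : {x // x ∈ S} => (i : κ))) from rfl]
        have hc1 : Fintype.card {x // x ∈ S} = 1 := by
          rw [Fintype.card_coe, hS, Finset.card_singleton]
        rw [Matrix.permanent_eq_elem_of_card_eq_one hc1 ⟨i₀, by simp [hS]⟩]
        rfl
      calc ∏ i, (M i i).re
          = (M i₀ i₀).re * ∏ i : {x // x ∈ Sᶜ}, (M ↑i ↑i).re := hprod
        _ ≤ (M i₀ i₀).re * (_root_.permanent (M.submatrix (fun i : {x // x ∈ Sᶜ} => (i : κ))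
              (fun i : {x // x ∈ Sᶜ} => (i : κ)))).re :=
            mul_le_mul_of_nonneg_left hIH (diag_re_nonneg M hM i₀)
        _ = (_root_.permanent (M.submatrix (fun i : {x // x ∈ S} => (i : κ))
              (fun i : {x // x ∈ S} => (i : κ)))).re *
            (_root_.permanent (M.submatrix (fun i : {x // x ∈ Sᶜ} => (i : κ))
              (fun i : {x // x ∈ Sᶜ} => (i : κ)))).re := by rw [hpermS]
        _ ≤ (_root_.permanent M).re := main_ineq M hM S

end Main

theorem stmt0 (n : ℕ) (M : Matrix (Fin n) (Fin n) ℂ) (hM : M.PosSemidef)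
    (S : Finset (Fin n)) :
    (permanent (M.submatrix (fun i : {x // x ∈ S} => (i : Fin n))
        (fun i : {x // x ∈ S} => (i : Fin n)))).re *
      (permanent (M.submatrix (fun i : {x // x ∈ Sᶜ} => (i : Fin n))
        (fun i : {x // x ∈ Sᶜ} => (i : Fin n)))).re ≤ (permanent M).re
    ∧ (∏ i, (M i i).re) ≤ (permanent M).re :=
  ⟨main_ineq M hM S, diag_le_perm (Fintype.card (Fin n)) M hM rfl⟩
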